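/- Let H be a complex Hilbert space and T a bounded operator on H with ‖T sin α + i cos α·I‖ ≤ 1 and ‖T sin α - i cos α·I‖ ≤ 1 for some α ∈ (0, π/2). Then for every f ∈ H, 2|Im ⟪T f, f⟫| ≤ tan α · (‖f‖² - ‖T f‖²); in particular T is a contraction. -/

import Mathlib

open scoped ComplexInnerProductSpace

lemma stmt2_aux {H : Type*} [NormedAddCommGroup H] [InnerProductSpace ℂ H]
    (T : H →L[ℂ] H) (s c : ℝ) (f : H) :
    ‖(s : ℂ) • T f + (Complex.I * (c : ℂ)) • f‖ ^ 2
      = s ^ 2 * ‖T f‖ ^ 2 + c ^ 2 * ‖f‖ ^ 2 - 2 * s * c * (⟪T f, f⟫).im := by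
  rw [@norm_add_sq ℂ, inner_smul_left, inner_smul_right, norm_smul, norm_smul]
  simp [Complex.norm_real, mul_pow, Complex.mul_re, Complex.mul_im, Complex.normSq,
    abs_mul, sq_abs]
  ring

/-- If `‖T sin α ± i cos α · I‖ ≤ 1` for some `α ∈ (0, π/2)`, then
`2|Im ⟪Tf,f⟫| ≤ tan α (‖f‖² - ‖Tf‖²)` for all `f`; in particular `T` is a contraction. -/
theorem stmt_2 {H : Type*} [NormedAddCommGroup H] [InnerProductSpace ℂ H] [CompleteSpace H]
    (T : H →L[ℂ] H) (α : ℝ) (hα : α ∈ Set.Ioo 0 (Real.pi / 2))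
    (hplus : ‖((Real.sin α : ℂ)) • T + (Complex.I * (Real.cos α : ℂ)) • (1 : H →L[ℂ] H)‖ ≤ 1)
    (hminus : ‖((Real.sin α : ℂ)) • T - (Complex.I * (Real.cos α : ℂ)) • (1 : H →L[ℂ] H)‖ ≤ 1) :
    (∀ f : H, 2 * |(⟪T f, f⟫).im| ≤ Real.tan α * (‖f‖ ^ 2 - ‖T f‖ ^ 2)) ∧ ‖T‖ ≤ 1 := by
  obtain ⟨hα1, hα2⟩ := hα
  have hpi := Real.pi_pos
  have hs : 0 < Real.sin α := Real.sin_pos_of_pos_of_lt_pi hα1 (by linarith)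
  have hc : 0 < Real.cos α := Real.cos_pos_of_mem_Ioo ⟨by linarith, hα2⟩
  set s := Real.sin α with hsdef
  set c := Real.cos α with hcdef
  have pyth : s ^ 2 + c ^ 2 = 1 := Real.sin_sq_add_cos_sq α
  have key1 : ∀ f : H, s ^ 2 * ‖T f‖ ^ 2 + c ^ 2 * ‖f‖ ^ 2 - 2 * s * c * (⟪T f, f⟫).im
      ≤ ‖f‖ ^ 2 := by
    intro f
    have h1 : ‖((s : ℂ) • T + (Complex.I * (c : ℂ)) • (1 : H →L[ℂ] H)) f‖ ≤ ‖f‖ := by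
      calc ‖((s : ℂ) • T + (Complex.I * (c : ℂ)) • (1 : H →L[ℂ] H)) f‖
          ≤ ‖((s : ℂ) • T + (Complex.I * (c : ℂ)) • (1 : H →L[ℂ] H))‖ * ‖f‖ :=
            ContinuousLinearMap.le_opNorm _ f
        _ ≤ 1 * ‖f‖ := by gcongr
        _ = ‖f‖ := one_mul _
    have h2 : ((s : ℂ) • T + (Complex.I * (c : ℂ)) • (1 : H →L[ℂ] H)) f
        = (s : ℂ) • T f + (Complex.I * (c : ℂ)) • f := by simp
    have h3 := stmt2_aux T s c f
    rw [h2] at h1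
    nlinarith [norm_nonneg f, norm_nonneg ((s : ℂ) • T f + (Complex.I * (c : ℂ)) • f)]
  have key2 : ∀ f : H, s ^ 2 * ‖T f‖ ^ 2 + c ^ 2 * ‖f‖ ^ 2 + 2 * s * c * (⟪T f, f⟫).im
      ≤ ‖f‖ ^ 2 := by
    intro f
    have h1 : ‖((s : ℂ) • T - (Complex.I * (c : ℂ)) • (1 : H →L[ℂ] H)) f‖ ≤ ‖f‖ := by
      calc ‖((s : ℂ) • T - (Complex.I * (c : ℂ)) • (1 : H →L[ℂ] H)) f‖
          ≤ ‖((s : ℂ) • T - (Complex.I * (c : ℂ)) • (1 : H →L[ℂ] H))‖ * ‖f‖ :=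
            ContinuousLinearMap.le_opNorm _ f
        _ ≤ 1 * ‖f‖ := by gcongr
        _ = ‖f‖ := one_mul _
    have h2 : ((s : ℂ) • T - (Complex.I * (c : ℂ)) • (1 : H →L[ℂ] H)) f
        = (s : ℂ) • T f + (Complex.I * ((-c : ℝ) : ℂ)) • f := by
      push_cast; simp; ring_nf; module
    have h3 := stmt2_aux T s (-c) f
    rw [h2] at h1
    nlinarith [norm_nonneg f, norm_nonneg ((s : ℂ) • T f + (Complex.I * ((-c : ℝ) : ℂ)) • f)]
  have main : ∀ f : H, 2 * |(⟪T f, f⟫).im| ≤ Real.tan α * (‖f‖ ^ 2 - ‖T f‖ ^ 2) := by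
    intro f
    have k1 := key1 f
    have k2 := key2 f
    rw [Real.tan_eq_sin_div_cos]
    rcases abs_cases ((⟪T f, f⟫).im) with ⟨h, _⟩ | ⟨h, _⟩ <;>
      rw [h, div_mul_eq_mul_div, le_div_iff₀ hc] <;> nlinarith
  refine ⟨main, ?_⟩
  apply ContinuousLinearMap.opNorm_le_bound _ zero_le_one
  intro f
  have := main f
  have htan : 0 < Real.tan α := Real.tan_pos_of_pos_of_lt_pi_div_two hα1 hα2
  have habs : 0 ≤ |(⟪T f, f⟫).im| := abs_nonneg _
  have hdiff : 0 ≤ ‖f‖ ^ 2 - ‖T f‖ ^ 2 := nonneg_of_mul_nonneg_right (by nlinarith) htan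
  rw [one_mul]
  nlinarith [norm_nonneg f, norm_nonneg (T f)]
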